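/- Invariant 1 part (c) for the generic algorithm: for every reachable configuration of Algorithm GQME and every process p, if p is not in the queue of M, then p is in phase NEAR_NCS and Wait[p] = true. -/

import Mathlib

/-- The phase of a process in Algorithm GQME. -/
inductive GPhase
  | nearNCS   -- after dequeue, before the next enqueue (includes the NCS)
  | doorway   -- between enqueue and isHead
  | wait
  | doneWait
  | noWait    -- after isHead returned true, before dequeue
deriving DecidableEq

/-- A configuration of Algorithm GQME: the state (Q, V) of the atomic MutexQueue M,
the Wait registers, the phase of each process, and the number of passages each process
has started (incremented at its enqueue). -/
structure GConfig (N : ℕ) where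
  Q : List (Fin N)
  V : Finset (Fin N)
  Wait : Fin N → Bool
  phase : Fin N → GPhase
  pass : Fin N → ℕ

/-- Initially the queue is empty, all Wait registers are true, all processes are in
NEAR_NCS, and no passages have been started. -/
def gInit (N : ℕ) : GConfig N :=
  ⟨[], ∅, fun _ => true, fun _ => GPhase.nearNCS, fun _ => 0⟩

/-- Events (shared-memory steps) of Algorithm GQME. -/
inductive GEv (N : ℕ)
  | enq (p : Fin N)                       -- M.enqueue()               (line 2)
  | isHeadT (p : Fin N)                   -- M.isHead() returns true   (line 3)
  | isHeadF (p : Fin N)                   -- M.isHead() returns false  (line 3)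
  | exitWait (p : Fin N)
  | deq (p : Fin N) (r : Option (Fin N))
deriving DecidableEq

/-- The transition relation of Algorithm GQME, following the pseudocode and the
(non-broken) MutexQueue transition function. -/
inductive GStep (N : ℕ) : GConfig N → GEv N → GConfig N → Prop
  | enq (c : GConfig N) (p : Fin N) :
      c.phase p = GPhase.nearNCS → p ∉ c.Q →
      GStep N c (GEv.enq p)
        { c with Q := c.Q ++ [p],
                 phase := Function.update c.phase p GPhase.doorway,
                 pass := Function.update c.pass p (c.pass p + 1) }
  | isHeadT (c : GConfig N) (p : Fin N) :
      c.phase p = GPhase.doorway → p ∈ c.Q → p ∉ c.V → c.Q.head? = some p →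
      GStep N c (GEv.isHeadT p)
        { c with V := insert p c.V,
                 phase := Function.update c.phase p GPhase.noWait }
  | isHeadF (c : GConfig N) (p : Fin N) :
      c.phase p = GPhase.doorway → p ∈ c.Q → p ∉ c.V → c.Q.head? ≠ some p →
      GStep N c (GEv.isHeadF p)
        { c with V := insert p c.V,
                 phase := Function.update c.phase p GPhase.wait }
  | exitWait (c : GConfig N) (p : Fin N) :
      c.phase p = GPhase.wait → c.Wait p = false →
      GStep N c (GEv.exitWait p)
        { c with Wait := Function.update c.Wait p true,
                 phase := Function.update c.phase p GPhase.doneWait }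
  | deq (c : GConfig N) (p : Fin N) (r : Option (Fin N)) :
      (c.phase p = GPhase.noWait ∨ c.phase p = GPhase.doneWait) →
      c.Q.head? = some p → p ∈ c.V →
      r = (match c.Q[1]? with
           | some q => if q ∈ c.V then some q else none
           | none => none) →
      GStep N c (GEv.deq p r)
        { c with Q := c.Q.tail, V := c.V.erase p,
                 Wait := (match r with
                          | some q => Function.update c.Wait q false
                          | none => c.Wait),
                 phase := Function.update c.phase p GPhase.nearNCS }

/-- `GReaches N c H c'`: the history H of events leads from configuration c to c'. -/
inductive GReaches (N : ℕ) : GConfig N → List (GEv N) → GConfig N → Prop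
  | nil (c : GConfig N) : GReaches N c [] c
  | cons {c c1 c2 : GConfig N} {e : GEv N} {l : List (GEv N)} :
      GStep N c e c1 → GReaches N c1 l c2 → GReaches N c (e :: l) c2

/-- A process is in the critical section iff it is between line 3/5 and line 7. -/
def inCS {N : ℕ} (c : GConfig N) (p : Fin N) : Prop :=
  c.phase p = GPhase.noWait ∨ c.phase p = GPhase.doneWait

/-- The full inductive invariant. -/
def GInv {N : ℕ} (c : GConfig N) : Prop :=
  c.Q.Nodup ∧
  (∀ p, p ∉ c.Q → c.phase p = GPhase.nearNCS ∧ c.Wait p = true) ∧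
  (∀ p, c.phase p = GPhase.noWait ∨ c.phase p = GPhase.doneWait →
      c.Q.head? = some p) ∧
  (∀ p, c.Wait p = false → c.Q.head? = some p ∧ c.phase p = GPhase.wait) ∧
  (∀ p, p ∈ c.V → c.phase p ≠ GPhase.doorway ∧ c.phase p ≠ GPhase.nearNCS) ∧
  (∀ p, p ∈ c.V → p ∈ c.Q)

lemma ginv_init (N : ℕ) : GInv (gInit N) := by
  refine ⟨by simp [gInit], ?_, ?_, ?_, ?_, ?_⟩ <;> simp [gInit]

lemma ginv_step {N : ℕ} {c c' : GConfig N} {e : GEv N}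
    (h : GStep N c e c') (hc : GInv c) : GInv c' := by
  obtain ⟨h1, h2, h3, h7, h5, h6⟩ := hc
  cases h with
  | enq p hph hpQ =>
    have hWp : c.Wait p = true := (h2 p hpQ).2
    have hpV : p ∉ c.V := fun hv => hpQ (h6 p hv)
    refine ⟨?_, ?_, ?_, ?_, ?_, ?_⟩
    · simpa [List.nodup_append, hpQ] using And.intro h1 (fun a (ha : a ∈ c.Q) (hap : a = p) => hpQ (hap ▸ ha))
    · intro q hq
      simp only [List.mem_append, List.mem_singleton, not_or] at hq
      have := h2 q hq.1
      simp [Function.update_apply, hq.2, this.1, this.2]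
    · intro q hq
      simp only [Function.update_apply] at hq
      by_cases hqp : q = p
      · simp [hqp] at hq
      · simp [hqp] at hq
        have := h3 q hq
        cases hQ : c.Q with
        | nil => simp [hQ] at this
        | cons a t => simp_all
    · intro q hq
      simp only at hq
      have := h7 q hq
      have hqp : q ≠ p := by
        intro hqp; rw [hqp] at this; rw [hph] at this; exact absurd this.2 (by simp)
      refine ⟨?_, by simp [Function.update_apply, hqp, this.2]⟩
      cases hQ : c.Q with
      | nil => rw [hQ] at this; simp at this
      | cons a t =>
        rw [hQ] at this; simp at this; simp [this.1]
    · intro q hq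
      simp only at hq
      have hqp : q ≠ p := fun h => hpV (h ▸ hq)
      have := h5 q hq
      simp [Function.update_apply, hqp, this.1, this.2]
    · intro q hq; simp only at hq
      exact List.mem_append_left _ (h6 q hq)
  | isHeadT p hph hpQ hpV hhead =>
    refine ⟨h1, ?_, ?_, ?_, ?_, ?_⟩
    · intro q hq
      have hqp : q ≠ p := fun h => hq (h ▸ hpQ)
      have := h2 q hq
      simp [Function.update_apply, hqp, this.1, this.2]
    · intro q hq
      simp only [Function.update_apply] at hq
      by_cases hqp : q = p
      · simp [hqp, hhead]
      · simp [hqp] at hq; exact h3 q hq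
    · intro q hq
      simp only at hq
      have := h7 q hq
      have hqp : q ≠ p := by
        intro h; rw [h, hph] at this; exact absurd this.2 (by simp)
      exact ⟨this.1, by simp [Function.update_apply, hqp, this.2]⟩
    · intro q hq
      simp only [Finset.mem_insert] at hq
      rcases hq with hq | hq
      · subst hq; simp
      · have := h5 q hq
        by_cases hqp : q = p
        · subst hqp; simp
        · simp [Function.update_apply, hqp, this.1, this.2]
    · intro q hq
      simp only [Finset.mem_insert] at hq
      rcases hq with hq | hq
      · exact hq ▸ hpQ
      · exact h6 q hq
  | isHeadF p hph hpQ hpV hhead =>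
    refine ⟨h1, ?_, ?_, ?_, ?_, ?_⟩
    · intro q hq
      have hqp : q ≠ p := fun h => hq (h ▸ hpQ)
      have := h2 q hq
      simp [Function.update_apply, hqp, this.1, this.2]
    · intro q hq
      simp only [Function.update_apply] at hq
      by_cases hqp : q = p
      · simp [hqp] at hq
      · simp [hqp] at hq; exact h3 q hq
    · intro q hq
      simp only at hq
      have := h7 q hq
      have hqp : q ≠ p := by
        intro h; rw [h, hph] at this; exact absurd this.2 (by simp)
      exact ⟨this.1, by simp [Function.update_apply, hqp, this.2]⟩
    · intro q hq
      simp only [Finset.mem_insert] at hq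
      rcases hq with hq | hq
      · subst hq; simp
      · have := h5 q hq
        by_cases hqp : q = p
        · subst hqp; simp
        · simp [Function.update_apply, hqp, this.1, this.2]
    · intro q hq
      simp only [Finset.mem_insert] at hq
      rcases hq with hq | hq
      · exact hq ▸ hpQ
      · exact h6 q hq
  | exitWait p hph hW =>
    have hhead : c.Q.head? = some p := (h7 p hW).1
    have hpQ : p ∈ c.Q := by
      cases hQ : c.Q with
      | nil => rw [hQ] at hhead; simp at hhead
      | cons a t => rw [hQ] at hhead; simp at hhead; simp [hQ, hhead]
    refine ⟨h1, ?_, ?_, ?_, ?_, ?_⟩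
    · intro q hq
      have hqp : q ≠ p := fun h => hq (h ▸ hpQ)
      have := h2 q hq
      simp [Function.update_apply, hqp, this.1, this.2]
    · intro q hq
      simp only [Function.update_apply] at hq
      by_cases hqp : q = p
      · exact hqp ▸ hhead
      · simp [hqp] at hq; exact h3 q hq
    · intro q hq
      simp only [Function.update_apply] at hq
      by_cases hqp : q = p
      · simp [hqp] at hq
      · simp [hqp] at hq
        have := h7 q hq
        exact ⟨this.1, by simp [Function.update_apply, hqp, this.2]⟩
    · intro q hq
      have := h5 q hq
      by_cases hqp : q = p
      · subst hqp; simp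
      · simp [Function.update_apply, hqp, this.1, this.2]
    · exact h6
  | deq p r hcs hhead hpV hr =>
    obtain ⟨t, hQ⟩ : ∃ t, c.Q = p :: t := by
      cases hQ : c.Q with
      | nil => rw [hQ] at hhead; simp at hhead
      | cons a t => rw [hQ] at hhead; simp at hhead; exact ⟨t, by rw [hhead]⟩
    have hpt : p ∉ t := by
      rw [hQ] at h1; exact (List.nodup_cons.mp h1).1
    have hWp : c.Wait p = true := by
      by_contra hW
      simp only [Bool.not_eq_true] at hW
      have := (h7 p hW).2
      rcases hcs with h | h <;> rw [h] at this <;> simp at this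
    -- facts about r
    have hrfact : ∀ q, r = some q →
        q ∈ t ∧ t.head? = some q ∧ c.phase q = GPhase.wait ∧ q ≠ p := by
      intro q hrq
      rw [hrq] at hr
      rw [hQ] at hr
      simp only [List.getElem?_cons_succ] at hr
      cases ht : t[0]? with
      | none => rw [ht] at hr; simp at hr
      | some a =>
        rw [ht] at hr
        by_cases haV : a ∈ c.V
        · simp [haV] at hr
          subst hr
          have hqt : q ∈ t := List.mem_of_getElem? ht
          have hqhd : t.head? = some q := by rw [List.head?_eq_getElem?]; exact ht
          have hqp : q ≠ p := fun h => hpt (h ▸ hqt)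
          refine ⟨hqt, hqhd, ?_, hqp⟩
          have h5q := h5 q haV
          rcases hphq : c.phase q with _ | _ | _ | _ | _
          · exact absurd hphq h5q.2
          · exact absurd hphq h5q.1
          · rfl
          · have := h3 q (Or.inr hphq)
            rw [hQ] at this; simp at this; exact absurd this.symm hqp
          · have := h3 q (Or.inl hphq)
            rw [hQ] at this; simp at this; exact absurd this.symm hqp
        · simp [haV] at hr
    have hWfalse : ∀ q, c.Wait q = false → False := by
      intro q hWq
      have := h7 q hWq
      rw [hQ] at this
      simp only [List.head?_cons, Option.some.injEq] at this
      rcases hcs with h | h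
      · rw [this.1.symm, h] at this; simp at this
      · rw [this.1.symm, h] at this; simp at this
    have hWtrue : ∀ q, c.Wait q = true := by
      intro q
      cases h : c.Wait q with
      | false => exact (hWfalse q h).elim
      | true => rfl
    refine ⟨?_, ?_, ?_, ?_, ?_, ?_⟩
    · simp only [hQ, List.tail_cons]
      rw [hQ] at h1; exact (List.nodup_cons.mp h1).2
    · intro q hq
      simp only [hQ, List.tail_cons] at hq
      by_cases hqp : q = p
      · subst hqp
        refine ⟨by simp, ?_⟩
        cases hrc : r with
        | none => simp [hrc, hWp]
        | some a =>
          have := hrfact a hrc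
          simp [hrc, Function.update_apply, Ne.symm this.2.2.2, hWp]
      · have hqQ : q ∉ c.Q := by rw [hQ]; simp [hqp, hq]
        have := h2 q hqQ
        refine ⟨by simp [Function.update_apply, hqp, this.1], ?_⟩
        cases hrc : r with
        | none => simpa [hrc] using this.2
        | some a =>
          have ha := hrfact a hrc
          have hqa : q ≠ a := fun h => hq (h ▸ ha.1)
          simp [hrc, Function.update_apply, hqa, this.2]
    · intro q hq
      simp only [Function.update_apply] at hq
      by_cases hqp : q = p
      · simp [hqp] at hq
      · simp [hqp] at hq
        have := h3 q hq
        rw [hQ] at this; simp at this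
        exact absurd this.symm hqp
    · intro q hq
      simp only at hq
      cases hrc : r with
      | none =>
        rw [hrc] at hq
        have hf : c.Wait q = false := hq
        rw [hWtrue q] at hf
        cases hf
      | some a =>
        rw [hrc] at hq
        have ha := hrfact a hrc
        by_cases hqa : q = a
        · subst hqa
          refine ⟨?_, by simp [Function.update_apply, ha.2.2.2, ha.2.2.1]⟩
          simp only [hQ, List.tail_cons]
          exact ha.2.1
        · have hf : Function.update c.Wait a false q = false := hq
          rw [Function.update_apply, if_neg hqa, hWtrue q] at hf
          cases hf
    · intro q hq
      simp only [Finset.mem_erase] at hq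
      have := h5 q hq.2
      simp [Function.update_apply, hq.1, this.1, this.2]
    · intro q hq
      simp only [Finset.mem_erase] at hq
      have := h6 q hq.2
      rw [hQ] at this
      simp only [hQ, List.tail_cons]
      rcases List.mem_cons.mp this with h | h
      · exact absurd h hq.1
      · exact h

lemma ginv_reaches {N : ℕ} {c c' : GConfig N} {H : List (GEv N)}
    (hrun : GReaches N c H c') (hc : GInv c) : GInv c' := by
  induction hrun with
  | nil => exact hc
  | cons hstep _ ih => exact ih (ginv_step hstep hc)

/-- Invariant 1 part (c): in every reachable configuration of Algorithm GQME, a process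
not in the queue of M is in phase NEAR_NCS and its Wait register is true. -/
theorem invariant_part_c (N : ℕ) (H : List (GEv N)) (c : GConfig N)
    (hrun : GReaches N (gInit N) H c) (p : Fin N) (hp : p ∉ c.Q) :
    c.phase p = GPhase.nearNCS ∧ c.Wait p = true := by
  have h := ginv_reaches hrun (ginv_init N)
  exact h.2.1 p hp
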